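/- arXiv:1609.03891 — 2 statements merged into one kernel-verified Lean document; each statement's English description precedes it below -/
import Mathlib

section
/- Let μ = (μ(t); 0 ≤ t ≤ 1) be a path in the space of permutons with μ(0) the identity permuton and μ(1) the reverse permuton. Then the energy of μ with respect to the 2-Wasserstein metric satisfies E(μ) ≥ π²/6. -/
open MeasureTheory Set Filter
open scoped ENNReal Real Topology

/-- The uniform probability measure on [-1,1]. -/
noncomputable def unif : Measure ℝ := (2 : ℝ≥0∞)⁻¹ • (volume.restrict (Icc (-1 : ℝ) 1))

/-- `t 0 = 0 < t 1 < ... < t k = 1` is a finite partition of [0,1]. -/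
def IsPartition (k : ℕ) (t : ℕ → ℝ) : Prop :=
  0 < k ∧ t 0 = 0 ∧ t k = 1 ∧ ∀ i < k, t i < t (i + 1)

/-- The energy of a path along partitions of [0,1], expressed in terms of the
squared-distance function `D s t` between the points `γ s` and `γ t` of the path:
`E = sup_Π Σ_i d(γ(t_i),γ(t_{i-1}))² / (t_i - t_{i-1})`. -/
noncomputable def energyOf (D : ℝ → ℝ → ℝ) : ℝ≥0∞ :=
  ⨆ (k : ℕ) (t : ℕ → ℝ) (_ : IsPartition k t),
    ENNReal.ofReal (∑ i ∈ Finset.range k, D (t i) (t (i + 1)) / (t (i + 1) - t i))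

/-- Optimal transportation cost between two measures for the cost `c`. -/
noncomputable def W2sqCost {K : Type*} [MeasurableSpace K] (c : K × K → ℝ)
    (μ ν : Measure K) : ℝ :=
  sInf {e | ∃ m : Measure (K × K), IsProbabilityMeasure m ∧
    m.map Prod.fst = μ ∧ m.map Prod.snd = ν ∧ e = ∫ p, c p ∂m}

/-- The squared 2-Wasserstein distance between measures on the plane,
with the Euclidean metric: `W₂(μ,ν)² = inf over couplings of E[‖V-W‖²]`. -/
noncomputable def W2sqE (μ ν : Measure (ℝ × ℝ)) : ℝ :=
  W2sqCost (fun p => (p.1.1 - p.2.1) ^ 2 + (p.1.2 - p.2.2) ^ 2) μ ν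

/-- A permuton: a Borel probability measure on the plane whose coordinate marginals
are uniform on [-1,1]. -/
def IsPermuton (μ : Measure (ℝ × ℝ)) : Prop :=
  IsProbabilityMeasure μ ∧ μ.map Prod.fst = unif ∧ μ.map Prod.snd = unif

/-- The identity permuton, the law of (X, X) with X ~ Uniform[-1,1]. -/
noncomputable def idPermuton : Measure (ℝ × ℝ) := unif.map (fun x => (x, x))

/-- The reverse permuton, the law of (X, -X) with X ~ Uniform[-1,1]. -/
noncomputable def revPermuton : Measure (ℝ × ℝ) := unif.map (fun x => (x, -x))

lemma unif_isProb : IsProbabilityMeasure unif := by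
  constructor
  rw [unif, Measure.smul_apply, Measure.restrict_apply MeasurableSet.univ]
  simp [Real.volume_Icc]
  rw [show ((1:ℝ) + 1) = 2 by norm_num, ENNReal.ofReal_ofNat,
    ENNReal.inv_mul_cancel two_ne_zero ENNReal.ofNat_ne_top]

lemma integral_sq_unif : ∫ x, x ^ 2 ∂unif = 1 / 3 := by
  rw [unif, integral_smul_measure, integral_Icc_eq_integral_Ioc,
    ← intervalIntegral.integral_of_le (by norm_num : (-1:ℝ) ≤ 1), integral_pow]
  norm_num

lemma unif_compl_zero : unif ((Icc (-1:ℝ) 1)ᶜ) = 0 := by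
  rw [unif, Measure.smul_apply, Measure.restrict_apply measurableSet_Icc.compl]
  simp

lemma permuton_ae {ν : Measure (ℝ × ℝ)} (h : IsPermuton ν) :
    ∀ᵐ p ∂ν, |p.1| ≤ 1 ∧ |p.2| ≤ 1 := by
  have h1 : ν (Prod.fst ⁻¹' (Icc (-1:ℝ) 1)ᶜ) = 0 := by
    rw [← Measure.map_apply measurable_fst measurableSet_Icc.compl, h.2.1]
    exact unif_compl_zero
  have h2 : ν (Prod.snd ⁻¹' (Icc (-1:ℝ) 1)ᶜ) = 0 := by
    rw [← Measure.map_apply measurable_snd measurableSet_Icc.compl, h.2.2]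
    exact unif_compl_zero
  have h1' : ∀ᵐ p ∂ν, p.1 ∈ Icc (-1:ℝ) 1 := by
    rw [ae_iff]; exact h1
  have h2' : ∀ᵐ p ∂ν, p.2 ∈ Icc (-1:ℝ) 1 := by
    rw [ae_iff]; exact h2
  filter_upwards [h1', h2'] with p hp1 hp2
  exact ⟨abs_le.2 ⟨hp1.1, hp1.2⟩, abs_le.2 ⟨hp2.1, hp2.2⟩⟩

lemma integrable_of_ae_bdd {α : Type*} [MeasurableSpace α] {ν : Measure α} [IsFiniteMeasure ν]
    {f : α → ℝ} (hm : AEStronglyMeasurable f ν) {C : ℝ} (h : ∀ᵐ a ∂ν, |f a| ≤ C) :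
    Integrable f ν :=
  ⟨hm, HasFiniteIntegral.of_bounded (C := C) (by simpa [Real.norm_eq_abs] using h)⟩

lemma integral_fst_sq {ν : Measure (ℝ × ℝ)} (h : IsPermuton ν) : ∫ p, p.1 ^ 2 ∂ν = 1 / 3 := by
  have key : ∫ x, x ^ 2 ∂(ν.map Prod.fst) = ∫ p, p.1 ^ 2 ∂ν :=
    integral_map measurable_fst.aemeasurable (continuous_pow 2).aestronglyMeasurable
  rw [← key, h.2.1, integral_sq_unif]

lemma integral_snd_sq {ν : Measure (ℝ × ℝ)} (h : IsPermuton ν) : ∫ p, p.2 ^ 2 ∂ν = 1 / 3 := by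
  have key : ∫ x, x ^ 2 ∂(ν.map Prod.snd) = ∫ p, p.2 ^ 2 ∂ν :=
    integral_map measurable_snd.aemeasurable (continuous_pow 2).aestronglyMeasurable
  rw [← key, h.2.2, integral_sq_unif]

noncomputable def Jm (ν : Measure (ℝ × ℝ)) : ℝ := ∫ p, (p.1 - p.2) ^ 2 ∂ν
noncomputable def Km (ν : Measure (ℝ × ℝ)) : ℝ := ∫ p, (p.1 + p.2) ^ 2 ∂ν

lemma Jm_nonneg (ν : Measure (ℝ × ℝ)) : 0 ≤ Jm ν := integral_nonneg fun p => sq_nonneg _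
lemma Km_nonneg (ν : Measure (ℝ × ℝ)) : 0 ≤ Km ν := integral_nonneg fun p => sq_nonneg _

lemma integrable_Jm {ν : Measure (ℝ × ℝ)} (h : IsPermuton ν) :
    Integrable (fun p : ℝ × ℝ => (p.1 - p.2) ^ 2) ν := by
  haveI := h.1
  refine integrable_of_ae_bdd ((continuous_fst.sub continuous_snd).pow 2).aestronglyMeasurable
    (C := 4) ?_
  filter_upwards [permuton_ae h] with p hp
  have h1 := abs_le.1 hp.1; have h2 := abs_le.1 hp.2
  rw [abs_of_nonneg (sq_nonneg _)]; nlinarith [h1.1, h1.2, h2.1, h2.2]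

lemma integrable_Km {ν : Measure (ℝ × ℝ)} (h : IsPermuton ν) :
    Integrable (fun p : ℝ × ℝ => (p.1 + p.2) ^ 2) ν := by
  haveI := h.1
  refine integrable_of_ae_bdd ((continuous_fst.add continuous_snd).pow 2).aestronglyMeasurable
    (C := 4) ?_
  filter_upwards [permuton_ae h] with p hp
  have h1 := abs_le.1 hp.1; have h2 := abs_le.1 hp.2
  rw [abs_of_nonneg (sq_nonneg _)]; nlinarith [h1.1, h1.2, h2.1, h2.2]

lemma JK_sum {ν : Measure (ℝ × ℝ)} (h : IsPermuton ν) : Jm ν + Km ν = 4 / 3 := by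
  haveI := h.1
  have int1 := integrable_Jm h
  have int2 := integrable_Km h
  have intf : Integrable (fun p : ℝ × ℝ => p.1 ^ 2) ν := by
    refine integrable_of_ae_bdd (continuous_fst.pow 2).aestronglyMeasurable (C := 1) ?_
    filter_upwards [permuton_ae h] with p hp
    have h1 := abs_le.1 hp.1
    rw [abs_of_nonneg (sq_nonneg _)]; nlinarith [h1.1, h1.2]
  have ints : Integrable (fun p : ℝ × ℝ => p.2 ^ 2) ν := by
    refine integrable_of_ae_bdd (continuous_snd.pow 2).aestronglyMeasurable (C := 1) ?_
    filter_upwards [permuton_ae h] with p hp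
    have h2 := abs_le.1 hp.2
    rw [abs_of_nonneg (sq_nonneg _)]; nlinarith [h2.1, h2.2]
  have key : ∫ p, ((p.1 - p.2) ^ 2 + (p.1 + p.2) ^ 2) ∂ν
      = ∫ p, (2 * p.1 ^ 2 + 2 * p.2 ^ 2) ∂ν := by
    congr 1; funext p; ring
  have e1 : Jm ν + Km ν = ∫ p, ((p.1 - p.2) ^ 2 + (p.1 + p.2) ^ 2) ∂ν :=
    (integral_add int1 int2).symm
  rw [e1, key, integral_add (intf.const_mul 2) (ints.const_mul 2),
    integral_const_mul, integral_const_mul, integral_fst_sq h, integral_snd_sq h]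
  norm_num

lemma Jm_id : Jm idPermuton = 0 := by
  rw [Jm, idPermuton,
    integral_map (measurable_id.prod measurable_id).aemeasurable
      (f := fun p : ℝ × ℝ => (p.1 - p.2) ^ 2)
      ((continuous_fst.sub continuous_snd).pow 2).aestronglyMeasurable]
  simp

lemma Km_rev : Km revPermuton = 0 := by
  rw [Km, revPermuton,
    integral_map (measurable_id.prod measurable_id.neg).aemeasurable
      (f := fun p : ℝ × ℝ => (p.1 + p.2) ^ 2)
      ((continuous_fst.add continuous_snd).pow 2).aestronglyMeasurable]
  simp

lemma cs_integral {α : Type*} [MeasurableSpace α] (m : Measure α)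
    {f g : α → ℝ} (hf2 : Integrable (fun a => f a ^ 2) m)
    (hg2 : Integrable (fun a => g a ^ 2) m)
    (hfg : Integrable (fun a => f a * g a) m) :
    ∫ a, f a * g a ∂m ≤ √(∫ a, f a ^ 2 ∂m) * √(∫ a, g a ^ 2 ∂m) := by
  set A := √(∫ a, f a ^ 2 ∂m) with hA
  set B := √(∫ a, g a ^ 2 ∂m) with hB
  have hAnn : 0 ≤ A := Real.sqrt_nonneg _
  have hBnn : 0 ≤ B := Real.sqrt_nonneg _
  have hA2 : A ^ 2 = ∫ a, f a ^ 2 ∂m := Real.sq_sqrt (integral_nonneg fun a => sq_nonneg _)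
  have hB2 : B ^ 2 = ∫ a, g a ^ 2 ∂m := Real.sq_sqrt (integral_nonneg fun a => sq_nonneg _)
  have expand : ∫ a, (B * f a - A * g a) ^ 2 ∂m
      = B ^ 2 * ∫ a, f a ^ 2 ∂m - (2 * (A * B)) * ∫ a, f a * g a ∂m
        + A ^ 2 * ∫ a, g a ^ 2 ∂m := by
    have hco : (fun a => (B * f a - A * g a) ^ 2)
        = fun a => B ^ 2 * f a ^ 2 - 2 * (A * B) * (f a * g a) + A ^ 2 * g a ^ 2 := by
      funext a; ring
    have i1 : Integrable (fun a => B ^ 2 * f a ^ 2 - 2 * (A * B) * (f a * g a)) m :=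
      (hf2.const_mul _).sub (hfg.const_mul _)
    have i2 : Integrable (fun a => B ^ 2 * f a ^ 2) m := hf2.const_mul _
    have i3 : Integrable (fun a => 2 * (A * B) * (f a * g a)) m := hfg.const_mul _
    have i4 : Integrable (fun a => A ^ 2 * g a ^ 2) m := hg2.const_mul _
    rw [hco, integral_add i1 i4, integral_sub i2 i3,
      integral_const_mul, integral_const_mul, integral_const_mul]
  have hnn : 0 ≤ ∫ a, (B * f a - A * g a) ^ 2 ∂m := integral_nonneg fun a => sq_nonneg _
  rw [expand, ← hA2, ← hB2] at hnn
  rcases lt_or_eq_of_le (mul_nonneg hAnn hBnn) with hAB | hAB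
  · have h' : A * B * (∫ a, f a * g a ∂m) ≤ A * B * (A * B) := by nlinarith
    exact le_of_mul_le_mul_left h' hAB
  · rcases mul_eq_zero.1 hAB.symm with hA0 | hB0
    · have hf0 : ∫ a, f a ^ 2 ∂m = 0 := by rw [← hA2, hA0]; ring
      have hfz : (fun a => f a ^ 2) =ᵐ[m] 0 :=
        (integral_eq_zero_iff_of_nonneg (fun a => sq_nonneg _) hf2).1 hf0
      have : ∫ a, f a * g a ∂m = 0 := by
        rw [integral_eq_zero_iff_of_nonneg_ae]
        · filter_upwards [hfz] with a ha
          have : f a = 0 := by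
            have := ha; simp only [Pi.zero_apply] at this
            exact pow_eq_zero_iff (n := 2) (by norm_num) |>.1 this
          simp [this]
        · filter_upwards [hfz] with a ha
          have : f a = 0 := by
            have := ha; simp only [Pi.zero_apply] at this
            exact pow_eq_zero_iff (n := 2) (by norm_num) |>.1 this
          simp [this]
        · exact hfg
      rw [this, ← hAB]
    · have hg0 : ∫ a, g a ^ 2 ∂m = 0 := by rw [← hB2, hB0]; ring
      have hgz : (fun a => g a ^ 2) =ᵐ[m] 0 :=
        (integral_eq_zero_iff_of_nonneg (fun a => sq_nonneg _) hg2).1 hg0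
      have : ∫ a, f a * g a ∂m = 0 := by
        rw [integral_eq_zero_iff_of_nonneg_ae]
        · filter_upwards [hgz] with a ha
          have : g a = 0 := by
            have := ha; simp only [Pi.zero_apply] at this
            exact pow_eq_zero_iff (n := 2) (by norm_num) |>.1 this
          simp [this]
        · filter_upwards [hgz] with a ha
          have : g a = 0 := by
            have := ha; simp only [Pi.zero_apply] at this
            exact pow_eq_zero_iff (n := 2) (by norm_num) |>.1 this
          simp [this]
        · exact hfg
      rw [this, ← hAB]

lemma l2_lower {α : Type*} [MeasurableSpace α] (m : Measure α)
    {f g : α → ℝ} (hf2 : Integrable (fun a => f a ^ 2) m)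
    (hg2 : Integrable (fun a => g a ^ 2) m)
    (hfg : Integrable (fun a => f a * g a) m) :
    (√(∫ a, f a ^ 2 ∂m) - √(∫ a, g a ^ 2 ∂m)) ^ 2 ≤ ∫ a, (f a - g a) ^ 2 ∂m := by
  have hcs := cs_integral m hf2 hg2 hfg
  have hA2 : (√(∫ a, f a ^ 2 ∂m)) ^ 2 = ∫ a, f a ^ 2 ∂m :=
    Real.sq_sqrt (integral_nonneg fun a => sq_nonneg _)
  have hB2 : (√(∫ a, g a ^ 2 ∂m)) ^ 2 = ∫ a, g a ^ 2 ∂m :=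
    Real.sq_sqrt (integral_nonneg fun a => sq_nonneg _)
  have expand : ∫ a, (f a - g a) ^ 2 ∂m
      = ∫ a, f a ^ 2 ∂m - 2 * ∫ a, f a * g a ∂m + ∫ a, g a ^ 2 ∂m := by
    have hco : (fun a => (f a - g a) ^ 2)
        = fun a => f a ^ 2 - 2 * (f a * g a) + g a ^ 2 := by funext a; ring
    have i1 : Integrable (fun a => f a ^ 2 - 2 * (f a * g a)) m := hf2.sub (hfg.const_mul _)
    have i3 : Integrable (fun a => 2 * (f a * g a)) m := hfg.const_mul _
    rw [hco, integral_add i1 hg2, integral_sub hf2 i3, integral_const_mul]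
  rw [expand]
  nlinarith [hcs, hA2, hB2]

section Coupling

variable {νs νt : Measure (ℝ × ℝ)}

lemma coupling_ae (h : IsPermuton νs) {m : Measure ((ℝ × ℝ) × (ℝ × ℝ))}
    (h1 : m.map Prod.fst = νs) :
    ∀ᵐ q ∂m, |q.1.1| ≤ 1 ∧ |q.1.2| ≤ 1 := by
  have hset : MeasurableSet {p : ℝ × ℝ | |p.1| ≤ 1 ∧ |p.2| ≤ 1} :=
    (measurableSet_le (measurable_fst.abs) measurable_const).inter
      (measurableSet_le (measurable_snd.abs) measurable_const)
  have h := permuton_ae h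
  rw [← h1] at h
  exact (ae_map_iff measurable_fst.aemeasurable hset).mp h

lemma coupling_bound (hs : IsPermuton νs) (ht : IsPermuton νt)
    (m : Measure ((ℝ × ℝ) × (ℝ × ℝ))) (hm : IsProbabilityMeasure m)
    (h1 : m.map Prod.fst = νs) (h2 : m.map Prod.snd = νt) :
    ((√(Jm νs) - √(Jm νt)) ^ 2 + (√(Km νs) - √(Km νt)) ^ 2) / 2
      ≤ ∫ p, ((p.1.1 - p.2.1) ^ 2 + (p.1.2 - p.2.2) ^ 2) ∂m := by
  haveI := hm
  have hae1 := coupling_ae hs h1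
  have hae2 : ∀ᵐ q ∂m, |q.2.1| ≤ 1 ∧ |q.2.2| ≤ 1 := by
    have hset : MeasurableSet {p : ℝ × ℝ | |p.1| ≤ 1 ∧ |p.2| ≤ 1} :=
      (measurableSet_le (measurable_fst.abs) measurable_const).inter
        (measurableSet_le (measurable_snd.abs) measurable_const)
    have h := permuton_ae ht
    rw [← h2] at h
    exact (ae_map_iff measurable_snd.aemeasurable hset).mp h
  -- the four functions
  set u1 : (ℝ × ℝ) × (ℝ × ℝ) → ℝ := fun q => q.1.1 - q.1.2 with hu1
  set u2 : (ℝ × ℝ) × (ℝ × ℝ) → ℝ := fun q => q.2.1 - q.2.2 with hu2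
  set v1 : (ℝ × ℝ) × (ℝ × ℝ) → ℝ := fun q => q.1.1 + q.1.2 with hv1
  set v2 : (ℝ × ℝ) × (ℝ × ℝ) → ℝ := fun q => q.2.1 + q.2.2 with hv2
  have hub : ∀ᵐ q ∂m, |u1 q| ≤ 2 ∧ |u2 q| ≤ 2 ∧ |v1 q| ≤ 2 ∧ |v2 q| ≤ 2 := by
    filter_upwards [hae1, hae2] with q hq1 hq2
    have a1 := abs_le.1 hq1.1; have a2 := abs_le.1 hq1.2
    have a3 := abs_le.1 hq2.1; have a4 := abs_le.1 hq2.2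
    refine ⟨abs_le.2 ⟨by simp [hu1]; linarith [a1.1, a2.2], by simp [hu1]; linarith [a1.2, a2.1]⟩,
      abs_le.2 ⟨by simp [hu2]; linarith [a3.1, a4.2], by simp [hu2]; linarith [a3.2, a4.1]⟩,
      abs_le.2 ⟨by simp [hv1]; linarith [a1.1, a2.1], by simp [hv1]; linarith [a1.2, a2.2]⟩,
      abs_le.2 ⟨by simp [hv2]; linarith [a3.1, a4.1], by simp [hv2]; linarith [a3.2, a4.2]⟩⟩
  have mu1 : Measurable u1 := (measurable_fst.fst.sub measurable_fst.snd)
  have mu2 : Measurable u2 := (measurable_snd.fst.sub measurable_snd.snd)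
  have mv1 : Measurable v1 := (measurable_fst.fst.add measurable_fst.snd)
  have mv2 : Measurable v2 := (measurable_snd.fst.add measurable_snd.snd)
  have sqbdd : ∀ (f : (ℝ × ℝ) × (ℝ × ℝ) → ℝ) (C : ℝ), 0 ≤ C → Measurable f →
      (∀ᵐ q ∂m, |f q| ≤ C) → Integrable (fun q => f q ^ 2) m := by
    intro f C hC hf hb
    refine integrable_of_ae_bdd ((hf.pow_const 2).aestronglyMeasurable) (C := C ^ 2) ?_
    filter_upwards [hb] with q hq
    rw [abs_of_nonneg (sq_nonneg _)]
    calc f q ^ 2 = |f q| ^ 2 := (sq_abs _).symm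
    _ ≤ C ^ 2 := by nlinarith [abs_nonneg (f q)]
  have iu1 : Integrable (fun q => u1 q ^ 2) m :=
    sqbdd u1 2 (by norm_num) mu1 (by filter_upwards [hub] with q hq; exact hq.1)
  have iu2 : Integrable (fun q => u2 q ^ 2) m :=
    sqbdd u2 2 (by norm_num) mu2 (by filter_upwards [hub] with q hq; exact hq.2.1)
  have iv1 : Integrable (fun q => v1 q ^ 2) m :=
    sqbdd v1 2 (by norm_num) mv1 (by filter_upwards [hub] with q hq; exact hq.2.2.1)
  have iv2 : Integrable (fun q => v2 q ^ 2) m :=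
    sqbdd v2 2 (by norm_num) mv2 (by filter_upwards [hub] with q hq; exact hq.2.2.2)
  have iuu : Integrable (fun q => u1 q * u2 q) m := by
    refine integrable_of_ae_bdd ((mu1.mul mu2).aestronglyMeasurable) (C := 4) ?_
    filter_upwards [hub] with q hq
    rw [abs_mul]
    nlinarith [hq.1, hq.2.1, abs_nonneg (u1 q), abs_nonneg (u2 q)]
  have ivv : Integrable (fun q => v1 q * v2 q) m := by
    refine integrable_of_ae_bdd ((mv1.mul mv2).aestronglyMeasurable) (C := 4) ?_
    filter_upwards [hub] with q hq
    rw [abs_mul]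
    nlinarith [hq.2.2.1, hq.2.2.2, abs_nonneg (v1 q), abs_nonneg (v2 q)]
  have iud : Integrable (fun q => (u1 q - u2 q) ^ 2) m := by
    have : (fun q => (u1 q - u2 q) ^ 2)
        = fun q => u1 q ^ 2 - 2 * (u1 q * u2 q) + u2 q ^ 2 := by funext q; ring
    rw [this]; exact (iu1.sub (iuu.const_mul 2)).add iu2
  have ivd : Integrable (fun q => (v1 q - v2 q) ^ 2) m := by
    have : (fun q => (v1 q - v2 q) ^ 2)
        = fun q => v1 q ^ 2 - 2 * (v1 q * v2 q) + v2 q ^ 2 := by funext q; ring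
    rw [this]; exact (iv1.sub (ivv.const_mul 2)).add iv2
  -- marginal identities
  have hJs : ∫ q, u1 q ^ 2 ∂m = Jm νs := by
    rw [← h1, Jm]
    exact (integral_map measurable_fst.aemeasurable
      ((continuous_fst.sub continuous_snd).pow 2).aestronglyMeasurable).symm
  have hJt : ∫ q, u2 q ^ 2 ∂m = Jm νt := by
    rw [← h2, Jm]
    exact (integral_map measurable_snd.aemeasurable
      ((continuous_fst.sub continuous_snd).pow 2).aestronglyMeasurable).symm
  have hKs : ∫ q, v1 q ^ 2 ∂m = Km νs := by
    rw [← h1, Km]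
    exact (integral_map measurable_fst.aemeasurable
      ((continuous_fst.add continuous_snd).pow 2).aestronglyMeasurable).symm
  have hKt : ∫ q, v2 q ^ 2 ∂m = Km νt := by
    rw [← h2, Km]
    exact (integral_map measurable_snd.aemeasurable
      ((continuous_fst.add continuous_snd).pow 2).aestronglyMeasurable).symm
  -- rewrite the cost
  have hcost : ∫ p, ((p.1.1 - p.2.1) ^ 2 + (p.1.2 - p.2.2) ^ 2) ∂m
      = (∫ q, (u1 q - u2 q) ^ 2 ∂m + ∫ q, (v1 q - v2 q) ^ 2 ∂m) / 2 := by
    have hpt : (fun p : (ℝ × ℝ) × (ℝ × ℝ) => (p.1.1 - p.2.1) ^ 2 + (p.1.2 - p.2.2) ^ 2)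
        = fun q => ((u1 q - u2 q) ^ 2 + (v1 q - v2 q) ^ 2) / 2 := by
      funext q; simp only [hu1, hu2, hv1, hv2]; ring
    rw [hpt]
    rw [integral_div, integral_add iud ivd]
  rw [hcost]
  have b1 := l2_lower m iu1 iu2 iuu
  have b2 := l2_lower m iv1 iv2 ivv
  rw [hJs, hJt] at b1
  rw [hKs, hKt] at b2
  linarith

lemma W2_lower (hs : IsPermuton νs) (ht : IsPermuton νt) :
    ((√(Jm νs) - √(Jm νt)) ^ 2 + (√(Km νs) - √(Km νt)) ^ 2) / 2 ≤ W2sqE νs νt := by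
  haveI := hs.1; haveI := ht.1
  apply le_csInf
  · refine ⟨∫ p, ((p.1.1 - p.2.1) ^ 2 + (p.1.2 - p.2.2) ^ 2) ∂(νs.prod νt),
      νs.prod νt, inferInstance, ?_, ?_, rfl⟩
    · rw [Measure.map_fst_prod]; simp
    · rw [Measure.map_snd_prod]; simp
  · rintro e ⟨m, hm, h1, h2, rfl⟩
    exact coupling_bound hs ht m hm h1 h2

end Coupling

lemma chord_identity (A B : ℝ) :
    (Real.sin A - Real.sin B) ^ 2 + (Real.cos A - Real.cos B) ^ 2
      = 4 * Real.sin ((A - B) / 2) ^ 2 := by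
  have h1 := Real.sin_sq_add_cos_sq A
  have h2 := Real.sin_sq_add_cos_sq B
  have h3 := Real.cos_sub A B
  have h4 := Real.sin_sq_eq_half_sub ((A - B) / 2)
  rw [show 2 * ((A - B) / 2) = A - B by ring] at h4
  linear_combination h1 + h2 + 2 * h3 - 4 * h4

lemma jordan_sq {y : ℝ} (h : |y| ≤ π / 2) : (2 / π) ^ 2 * y ^ 2 ≤ Real.sin y ^ 2 := by
  have hπ := Real.pi_pos
  rcases le_or_gt 0 y with hy | hy
  · have hy' : y ≤ π / 2 := by rw [abs_of_nonneg hy] at h; exact h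
    have h1 := Real.mul_le_sin hy hy'
    have h0 : 0 ≤ 2 / π * y := by positivity
    calc (2 / π) ^ 2 * y ^ 2 = (2 / π * y) ^ 2 := by ring
    _ ≤ Real.sin y ^ 2 := pow_le_pow_left₀ h0 h1 2
  · have hy1 : 0 ≤ -y := by linarith
    have hy' : -y ≤ π / 2 := by rw [abs_of_neg hy] at h; exact h
    have h1 := Real.mul_le_sin hy1 hy'
    have h0 : 0 ≤ 2 / π * (-y) := by positivity
    have h2 : (2 / π * (-y)) ^ 2 ≤ Real.sin (-y) ^ 2 := pow_le_pow_left₀ h0 h1 2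
    rw [Real.sin_neg] at h2
    calc (2 / π) ^ 2 * y ^ 2 = (2 / π * (-y)) ^ 2 := by ring
    _ ≤ (-Real.sin y) ^ 2 := h2
    _ = Real.sin y ^ 2 := by ring

lemma sin_sq_lb {y : ℝ} (h : |y| ≤ 1) : y ^ 2 - y ^ 4 / 2 ≤ Real.sin y ^ 2 := by
  have key : ∀ z : ℝ, 0 < z → z ≤ 1 → z ^ 2 - z ^ 4 / 2 ≤ Real.sin z ^ 2 := by
    intro z h0 h1
    have hs : z - z ^ 3 / 4 < Real.sin z := by
      have := Real.sin_gt_sub_cube h0; nlinarith [pow_pos h0 3]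
    have hnn : 0 ≤ z - z ^ 3 / 4 := by
      nlinarith [mul_nonneg (mul_nonneg h0.le (by linarith : (0:ℝ) ≤ 1 - z))
        (by linarith : (0:ℝ) ≤ 1 + z)]
    nlinarith [mul_self_le_mul_self hnn (le_of_lt hs), sq_nonneg (z ^ 3)]
  rcases lt_trichotomy y 0 with hy | hy | hy
  · have hk := key (-y) (by linarith) (by rw [abs_of_neg hy] at h; linarith)
    rw [Real.sin_neg] at hk; nlinarith [hk]
  · simp [hy]
  · exact key y hy (by rwa [abs_of_pos hy] at h)

lemma energy_lb (D : ℝ → ℝ → ℝ) (θ : ℝ → ℝ)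
    (hθm : ∀ t ∈ Icc (0:ℝ) 1, θ t ∈ Icc 0 (π / 2))
    (hθ0 : θ 0 = 0) (hθ1 : θ 1 = π / 2)
    (hD : ∀ s ∈ Icc (0:ℝ) 1, ∀ t ∈ Icc (0:ℝ) 1,
      8 / 3 * Real.sin ((θ t - θ s) / 2) ^ 2 ≤ D s t) :
    ENNReal.ofReal (π ^ 2 / 6) ≤ energyOf D := by
  have hπ := Real.pi_pos
  rcases eq_or_ne (energyOf D) ⊤ with htop | htop
  · simp [htop]
  set s := (energyOf D).toReal with hs
  have hs0 : 0 ≤ s := ENNReal.toReal_nonneg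
  have main : ∀ n : ℕ, 0 < n → π ^ 2 / 6 ≤ s + (3 * π ^ 4 * s ^ 2 / 256) / n := by
    intro n hn
    have hn' : (0:ℝ) < n := Nat.cast_pos.2 hn
    set T : ℕ → ℝ := fun i => (i : ℝ) / n with hT
    have hpart : IsPartition n T := by
      refine ⟨hn, by simp [hT], by simp only [hT]; exact div_self hn'.ne', ?_⟩
      intro i _
      rw [hT]
      push_cast
      rw [div_lt_div_iff_of_pos_right hn']
      linarith
    have hmem : ∀ i ≤ n, T i ∈ Icc (0:ℝ) 1 := by
      intro i hi
      refine ⟨by positivity, ?_⟩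
      rw [hT, div_le_one hn']
      exact_mod_cast hi
    set x : ℕ → ℝ := fun i => θ (T (i + 1)) - θ (T i) with hx
    have hΔ : ∀ i : ℕ, T (i + 1) - T i = 1 / n := by
      intro i; rw [hT]; push_cast; field_simp; ring
    -- term-wise lower bound
    have hterm : ∀ i ∈ Finset.range n,
        8 / 3 * Real.sin (x i / 2) ^ 2 * (n : ℝ) ≤ D (T i) (T (i + 1)) / (T (i + 1) - T i) := by
      intro i hi
      have hi' := Finset.mem_range.1 hi
      rw [hΔ i, show D (T i) (T (i + 1)) / (1 / (n:ℝ)) = D (T i) (T (i + 1)) * n from by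
        field_simp]
      exact mul_le_mul_of_nonneg_right
        (hD (T i) (hmem i (le_of_lt hi')) (T (i + 1)) (hmem (i + 1) hi')) (le_of_lt hn')
    -- sum ≤ s
    have hofReal : ENNReal.ofReal
        (∑ i ∈ Finset.range n, D (T i) (T (i + 1)) / (T (i + 1) - T i)) ≤ energyOf D := by
      rw [energyOf]
      exact le_iSup_of_le n (le_iSup_of_le T (le_iSup_of_le hpart le_rfl))
    have hsum_le : (∑ i ∈ Finset.range n, D (T i) (T (i + 1)) / (T (i + 1) - T i)) ≤ s := by
      refine (ENNReal.ofReal_le_ofReal_iff hs0).1 ?_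
      rw [hs, ENNReal.ofReal_toReal htop]
      exact hofReal
    set Q : ℝ := ∑ i ∈ Finset.range n, Real.sin (x i / 2) ^ 2 with hQ
    have hQ0 : 0 ≤ Q := Finset.sum_nonneg fun i _ => sq_nonneg _
    have h1 : 8 / 3 * Q * (n : ℝ) ≤ s := by
      have hss := Finset.sum_le_sum hterm
      rw [← Finset.sum_mul, ← Finset.mul_sum] at hss
      exact le_trans hss hsum_le
    have hxb : ∀ i ∈ Finset.range n, |x i| ≤ π / 2 := by
      intro i hi
      have hi' := Finset.mem_range.1 hi
      have m1 := hθm (T i) (hmem i (le_of_lt hi'))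
      have m2 := hθm (T (i + 1)) (hmem (i + 1) hi')
      rw [hx]
      exact abs_le.2 ⟨by simp only; linarith [m1.1, m1.2, m2.1, m2.2],
        by simp only; linarith [m1.1, m1.2, m2.1, m2.2]⟩
    have hx2 : ∀ i ∈ Finset.range n, x i ^ 2 ≤ π ^ 2 * Real.sin (x i / 2) ^ 2 := by
      intro i hi
      have hy : |x i / 2| ≤ π / 2 := by
        rw [abs_div]
        have := hxb i hi
        rw [abs_of_pos (by norm_num : (0:ℝ) < 2)]
        linarith
      have hj := jordan_sq hy
      have hmul := mul_le_mul_of_nonneg_left hj (le_of_lt (by positivity : (0:ℝ) < π ^ 2))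
      calc x i ^ 2 = π ^ 2 * ((2 / π) ^ 2 * (x i / 2) ^ 2) := by
            field_simp
            try ring
      _ ≤ π ^ 2 * Real.sin (x i / 2) ^ 2 := hmul
    set P : ℝ := ∑ i ∈ Finset.range n, x i ^ 2 with hP
    have hP0 : 0 ≤ P := Finset.sum_nonneg fun i _ => sq_nonneg _
    have h2 : P ≤ π ^ 2 * Q := by
      rw [hP, hQ, Finset.mul_sum]
      exact Finset.sum_le_sum hx2
    have hsumx : ∑ i ∈ Finset.range n, x i = π / 2 := by
      rw [hx]
      rw [Finset.sum_range_sub (fun i => θ (T i)) n]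
      have hTn : T n = 1 := by rw [hT]; field_simp
      have hT0 : T 0 = 0 := by simp [hT]
      rw [hTn, hT0, hθ0, hθ1, sub_zero]
    have h3 : π ^ 2 / 4 ≤ (n : ℝ) * P := by
      have hc := sq_sum_le_card_mul_sum_sq (s := Finset.range n) (f := x)
      rw [Finset.card_range, hsumx] at hc
      calc π ^ 2 / 4 = (π / 2) ^ 2 := by ring
      _ ≤ (n : ℝ) * P := by exact_mod_cast hc
    have hQlow : ∀ i ∈ Finset.range n, x i ^ 2 / 4 - x i ^ 4 / 32 ≤ Real.sin (x i / 2) ^ 2 := by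
      intro i hi
      have hy : |x i / 2| ≤ 1 := by
        rw [abs_div, abs_of_pos (by norm_num : (0:ℝ) < 2)]
        have := hxb i hi
        have hπ4 := Real.pi_le_four
        linarith
      have hlb := sin_sq_lb hy
      calc x i ^ 2 / 4 - x i ^ 4 / 32 = (x i / 2) ^ 2 - (x i / 2) ^ 4 / 2 := by ring
      _ ≤ Real.sin (x i / 2) ^ 2 := hlb
    have hx4 : ∀ i ∈ Finset.range n, x i ^ 4 ≤ (π ^ 2 * Q) * x i ^ 2 := by
      intro i hi
      have hle : x i ^ 2 ≤ π ^ 2 * Q := by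
        refine le_trans (hx2 i hi) ?_
        have hsingle : Real.sin (x i / 2) ^ 2 ≤ Q :=
          Finset.single_le_sum (f := fun j => Real.sin (x j / 2) ^ 2)
            (fun j _ => sq_nonneg _) hi
        exact mul_le_mul_of_nonneg_left hsingle (by positivity)
      calc x i ^ 4 = x i ^ 2 * x i ^ 2 := by ring
      _ ≤ (π ^ 2 * Q) * x i ^ 2 := mul_le_mul_of_nonneg_right hle (sq_nonneg _)
    have h4 : P / 4 - (π ^ 2 * Q) * P / 32 ≤ Q := by
      have hA : ∑ i ∈ Finset.range n, (x i ^ 2 / 4 - x i ^ 4 / 32) ≤ Q :=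
        Finset.sum_le_sum hQlow
      have hB : ∑ i ∈ Finset.range n, x i ^ 4 ≤ (π ^ 2 * Q) * P := by
        rw [hP, Finset.mul_sum]
        exact Finset.sum_le_sum hx4
      have hsplit : ∑ i ∈ Finset.range n, (x i ^ 2 / 4 - x i ^ 4 / 32)
          = P / 4 - (∑ i ∈ Finset.range n, x i ^ 4) / 32 := by
        rw [Finset.sum_sub_distrib, ← Finset.sum_div, ← Finset.sum_div, hP]
      rw [hsplit] at hA
      linarith
    -- numeric assembly
    have hQle : Q ≤ 3 * s / (8 * (n : ℝ)) := by
      rw [le_div_iff₀ (by positivity)]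
      nlinarith [h1]
    have hPle : P ≤ 3 * π ^ 2 * s / (8 * (n : ℝ)) := by
      refine le_trans h2 ?_
      have := mul_le_mul_of_nonneg_left hQle (le_of_lt (by positivity : (0:ℝ) < π ^ 2))
      calc π ^ 2 * Q ≤ π ^ 2 * (3 * s / (8 * (n : ℝ))) := this
      _ = 3 * π ^ 2 * s / (8 * (n : ℝ)) := by ring
    have hnQP : (n : ℝ) * (Q * P) ≤ 9 * π ^ 2 * s ^ 2 / (64 * (n : ℝ)) := by
      have hqp : Q * P ≤ (3 * s / (8 * (n : ℝ))) * (3 * π ^ 2 * s / (8 * (n : ℝ))) :=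
        mul_le_mul hQle hPle hP0 (by positivity)
      calc (n : ℝ) * (Q * P)
          ≤ (n : ℝ) * ((3 * s / (8 * (n : ℝ))) * (3 * π ^ 2 * s / (8 * (n : ℝ)))) :=
            mul_le_mul_of_nonneg_left hqp (le_of_lt hn')
      _ = 9 * π ^ 2 * s ^ 2 / (64 * (n : ℝ)) := by field_simp; ring
    have h4n : (n : ℝ) * (P / 4 - (π ^ 2 * Q) * P / 32) ≤ (n : ℝ) * Q :=
      mul_le_mul_of_nonneg_left h4 (le_of_lt hn')
    have hnQ : (n : ℝ) * Q ≤ 3 * s / 8 := by linarith [h1]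
    have hmid : π ^ 2 / 6 ≤ s + (π ^ 2 / 12) * ((n : ℝ) * (Q * P)) := by
      linarith [h3, h4n, hnQ]
    have hlast : (π ^ 2 / 12) * ((n : ℝ) * (Q * P)) ≤ (3 * π ^ 4 * s ^ 2 / 256) / n := by
      have := mul_le_mul_of_nonneg_left hnQP (le_of_lt (by positivity : (0:ℝ) < π ^ 2 / 12))
      refine le_trans this (le_of_eq ?_)
      field_simp
      ring
    linarith
  -- conclude π²/6 ≤ s
  have hfinal : π ^ 2 / 6 ≤ s := by
    by_contra hcon
    push_neg at hcon
    have hgap0 : 0 < π ^ 2 / 6 - s := by linarith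
    obtain ⟨N, hN⟩ := exists_nat_gt ((3 * π ^ 4 * s ^ 2 / 256) / (π ^ 2 / 6 - s))
    have hN1 : (0:ℝ) < (N : ℝ) + 1 := by positivity
    have hdiv : (3 * π ^ 4 * s ^ 2 / 256) / ((N : ℝ) + 1) < π ^ 2 / 6 - s := by
      rw [div_lt_iff₀ hN1]
      have h' : (3 * π ^ 4 * s ^ 2 / 256) / (π ^ 2 / 6 - s) < (N : ℝ) + 1 := by linarith
      calc (3 * π ^ 4 * s ^ 2 / 256)
          = ((3 * π ^ 4 * s ^ 2 / 256) / (π ^ 2 / 6 - s)) * (π ^ 2 / 6 - s) :=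
            (div_mul_cancel₀ _ (ne_of_gt hgap0)).symm
      _ < ((N : ℝ) + 1) * (π ^ 2 / 6 - s) := mul_lt_mul_of_pos_right h' hgap0
      _ = (π ^ 2 / 6 - s) * ((N : ℝ) + 1) := by ring
    have hm := main (N + 1) (Nat.succ_pos N)
    push_cast at hm
    linarith
  calc ENNReal.ofReal (π ^ 2 / 6) ≤ ENNReal.ofReal s := ENNReal.ofReal_le_ofReal hfinal
  _ = energyOf D := by rw [hs, ENNReal.ofReal_toReal htop]

/-- any permuton-valued path from the identity permuton to the reverse
permuton has energy at least π²/6 in the 2-Wasserstein metric. -/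
theorem permuton_path_energy_ge
    (μ : ℝ → Measure (ℝ × ℝ))
    (hperm : ∀ t ∈ Icc (0:ℝ) 1, IsPermuton (μ t))
    (h0 : μ 0 = idPermuton) (h1 : μ 1 = revPermuton) :
    ENNReal.ofReal (π ^ 2 / 6) ≤ energyOf (fun s t => W2sqE (μ s) (μ t)) := by
  have hπ := Real.pi_pos
  have h0m : (0:ℝ) ∈ Icc (0:ℝ) 1 := by norm_num
  have h1m : (1:ℝ) ∈ Icc (0:ℝ) 1 := by norm_num
  set R : ℝ := √(4 / 3) with hR
  have hR0 : 0 < R := Real.sqrt_pos.2 (by norm_num)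
  have hR2 : R ^ 2 = 4 / 3 := Real.sq_sqrt (by norm_num)
  set θ : ℝ → ℝ := fun t => Real.arcsin (√(Jm (μ t)) / R) with hθ
  have hfacts : ∀ t ∈ Icc (0:ℝ) 1,
      √(Jm (μ t)) = R * Real.sin (θ t) ∧ √(Km (μ t)) = R * Real.cos (θ t) := by
    intro t ht
    have hp := hperm t ht
    have hsum := JK_sum hp
    have hJ0 := Jm_nonneg (μ t)
    have hK0 := Km_nonneg (μ t)
    have hJle : Jm (μ t) ≤ 4 / 3 := by linarith [Km_nonneg (μ t)]
    have hratio0 : 0 ≤ √(Jm (μ t)) / R := by positivity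
    have hratio1 : √(Jm (μ t)) / R ≤ 1 := by
      rw [div_le_one hR0, hR]
      exact Real.sqrt_le_sqrt hJle
    have hsin : Real.sin (θ t) = √(Jm (μ t)) / R :=
      Real.sin_arcsin (by linarith) hratio1
    constructor
    · rw [hsin]; field_simp
    · have hcos : Real.cos (θ t) = √(1 - (√(Jm (μ t)) / R) ^ 2) := Real.cos_arcsin _
      have hsq : (√(Jm (μ t)) / R) ^ 2 = Jm (μ t) / (4 / 3) := by
        rw [div_pow, Real.sq_sqrt hJ0, hR2]
      have h1x : 1 - (√(Jm (μ t)) / R) ^ 2 = Km (μ t) / (4 / 3) := by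
        rw [hsq]; field_simp; linarith
      have hcos2 : Real.cos (θ t) = √(Km (μ t)) / R := by
        rw [hcos, h1x, Real.sqrt_div hK0, ← hR]
      rw [hcos2]; field_simp
  have hθm : ∀ t ∈ Icc (0:ℝ) 1, θ t ∈ Icc 0 (π / 2) := by
    intro t ht
    exact ⟨Real.arcsin_nonneg.2 (by positivity), Real.arcsin_le_pi_div_two _⟩
  have hθ0 : θ 0 = 0 := by
    rw [hθ]
    simp only [h0, Jm_id, Real.sqrt_zero, zero_div, Real.arcsin_zero]
  have hθ1 : θ 1 = π / 2 := by
    have hp := hperm 1 h1m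
    have hsum := JK_sum hp
    have hK : Km (μ 1) = 0 := by rw [h1]; exact Km_rev
    have hJ : Jm (μ 1) = 4 / 3 := by linarith
    rw [hθ]
    simp only [hJ, ← hR]
    rw [div_self (ne_of_gt hR0), Real.arcsin_one]
  have hD : ∀ s ∈ Icc (0:ℝ) 1, ∀ t ∈ Icc (0:ℝ) 1,
      8 / 3 * Real.sin ((θ t - θ s) / 2) ^ 2 ≤ W2sqE (μ s) (μ t) := by
    intro s hsm t htm
    obtain ⟨hJs, hKs⟩ := hfacts s hsm
    obtain ⟨hJt, hKt⟩ := hfacts t htm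
    have hw := W2_lower (hperm s hsm) (hperm t htm)
    rw [hJs, hJt, hKs, hKt] at hw
    refine le_trans (le_of_eq ?_) hw
    have hodd : Real.sin ((θ t - θ s) / 2) ^ 2 = Real.sin ((θ s - θ t) / 2) ^ 2 := by
      rw [show (θ s - θ t) / 2 = -((θ t - θ s) / 2) by ring, Real.sin_neg]; ring
    rw [hodd]
    have hci := chord_identity (θ s) (θ t)
    linear_combination (-(R ^ 2) / 2) * hci - (2 * Real.sin ((θ s - θ t) / 2) ^ 2) * hR2
  exact energy_lb _ θ hθm hθ0 hθ1 hD
end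

section
/- Let H be a real Hilbert space and let γ : [0,1] → H be a continuous path lying on the unit sphere of H with γ(1) = −γ(0). If the energy of γ with respect to the norm metric equals π², then γ(t) = cos(πt)·γ(0) + sin(πt)·γ(1/2) for every t ∈ [0,1]. Conversely, any path of this form has energy π². -/
open MeasureTheory Set Filter
open scoped ENNReal Real Topology
open scoped RealInnerProductSpace

noncomputable def subPt (a b : ℝ) (n i : ℕ) : ℝ := a + (b - a) * i / n

noncomputable def fullT (s t : ℝ) (n : ℕ) : ℕ → ℝ := fun i =>
  if i ≤ n then subPt 0 s n i
  else if i ≤ 2*n then subPt s t n (i - n)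
  else subPt t 1 n (i - 2*n)

section Aux

variable {H : Type*} [NormedAddCommGroup H] [InnerProductSpace ℝ H]

lemma my_arccos_anti {x y : ℝ} (h : x ≤ y) : Real.arccos y ≤ Real.arccos x := by
  simp only [Real.arccos_eq_pi_div_two_sub_arcsin]
  linarith [Real.monotone_arcsin h]

lemma my_inner_mem {u v : H} (hu : ‖u‖ = 1) (hv : ‖v‖ = 1) :
    -1 ≤ ⟪u, v⟫ ∧ ⟪u, v⟫ ≤ 1 := by
  have := abs_real_inner_le_norm u v
  rw [hu, hv] at this
  constructor <;> [linarith [neg_abs_le ⟪u,v⟫]; linarith [le_abs_self ⟪u,v⟫]]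

lemma my_chord {u v : H} (hu : ‖u‖ = 1) (hv : ‖v‖ = 1) :
    ‖u - v‖ ^ 2 = 2 - 2 * ⟪u, v⟫ := by
  rw [norm_sub_sq_real, hu, hv]; ring

/-- Spherical triangle inequality for arccos of inner products of unit vectors. -/
lemma my_arccos_triangle {u v w : H} (hu : ‖u‖ = 1) (hv : ‖v‖ = 1) (hw : ‖w‖ = 1) :
    Real.arccos ⟪u, w⟫ ≤ Real.arccos ⟪u, v⟫ + Real.arccos ⟪v, w⟫ := by
  set a := Real.arccos ⟪u, v⟫ with ha
  set b := Real.arccos ⟪v, w⟫ with hb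
  rcases le_or_gt π (a + b) with hab | hab
  · exact le_trans (Real.arccos_le_pi _) hab
  have ha0 : 0 ≤ a := Real.arccos_nonneg _
  have hb0 : 0 ≤ b := Real.arccos_nonneg _
  obtain ⟨huv1, huv2⟩ := my_inner_mem hu hv
  obtain ⟨hvw1, hvw2⟩ := my_inner_mem hv hw
  have hcosa : Real.cos a = ⟪u, v⟫ := Real.cos_arccos huv1 huv2
  have hcosb : Real.cos b = ⟪v, w⟫ := Real.cos_arccos hvw1 hvw2
  have hsina : Real.sin a = Real.sqrt (1 - ⟪u,v⟫^2) := by rw [ha, Real.sin_arccos]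
  have hsinb : Real.sin b = Real.sqrt (1 - ⟪v,w⟫^2) := by rw [hb, Real.sin_arccos]
  set u' := u - ⟪u, v⟫ • v with hu'
  set w' := w - ⟪w, v⟫ • v with hw'
  have hnu' : ‖u'‖ = Real.sin a := by
    rw [hsina]
    rw [show (1 - ⟪u,v⟫^2) = ‖u'‖^2 by
      rw [hu', norm_sub_sq_real, inner_smul_right, norm_smul, hu, hv]
      simp [Real.norm_eq_abs, sq_abs]; ring]
    exact (Real.sqrt_sq (norm_nonneg _)).symm
  have hnw' : ‖w'‖ = Real.sin b := by
    rw [hsinb]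
    rw [show (1 - ⟪v,w⟫^2) = ‖w'‖^2 by
      rw [hw', norm_sub_sq_real, inner_smul_right, norm_smul, hw, hv, real_inner_comm w v]
      simp [Real.norm_eq_abs, sq_abs, real_inner_comm w v]; ring]
    exact (Real.sqrt_sq (norm_nonneg _)).symm
  have hinner : ⟪u, w⟫ = ⟪u,v⟫ * ⟪v,w⟫ + ⟪u', w'⟫ := by
    rw [hu', hw']
    simp only [inner_sub_left, inner_sub_right, inner_smul_left, inner_smul_right,
      real_inner_self_eq_norm_sq, hv]
    rw [real_inner_comm w v]
    push_cast
    ring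
  have hcs : -(‖u'‖ * ‖w'‖) ≤ ⟪u', w'⟫ := by
    have := abs_real_inner_le_norm u' w'
    linarith [neg_abs_le ⟪u', w'⟫]
  have hkey : Real.cos (a + b) ≤ ⟪u, w⟫ := by
    rw [Real.cos_add, hinner, hcosa, hcosb]
    have := hcs
    rw [hnu', hnw'] at this
    linarith
  calc Real.arccos ⟪u, w⟫ ≤ Real.arccos (Real.cos (a + b)) := my_arccos_anti hkey
    _ = a + b := Real.arccos_cos (by linarith) (by linarith)

/-- Chain triangle inequality. -/
lemma my_arccos_chain (v : ℕ → H) (hv : ∀ i, ‖v i‖ = 1) (n : ℕ) :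
    Real.arccos ⟪v 0, v n⟫ ≤ ∑ i ∈ Finset.range n, Real.arccos ⟪v i, v (i+1)⟫ := by
  induction n with
  | zero => simp [real_inner_self_eq_norm_sq, hv 0, Real.arccos_one]
  | succ n ih =>
      rw [Finset.sum_range_succ]
      exact le_trans (my_arccos_triangle (hv 0) (hv n) (hv (n+1))) (by linarith)

/-- chord = 2 sin(angle/2). -/
lemma my_chord_eq_sin {u v : H} (hu : ‖u‖ = 1) (hv : ‖v‖ = 1) :
    ‖u - v‖ = 2 * Real.sin (Real.arccos ⟪u, v⟫ / 2) := by
  obtain ⟨h1, h2⟩ := my_inner_mem hu hv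
  have hcos : Real.cos (Real.arccos ⟪u,v⟫) = ⟪u,v⟫ := Real.cos_arccos h1 h2
  have hsq : ‖u - v‖ ^ 2 = (2 * Real.sin (Real.arccos ⟪u, v⟫ / 2)) ^ 2 := by
    rw [my_chord hu hv]
    have h := Real.sin_sq_eq_half_sub (Real.arccos ⟪u,v⟫ / 2)
    rw [show 2 * (Real.arccos ⟪u,v⟫ / 2) = Real.arccos ⟪u,v⟫ by ring, hcos] at h
    nlinarith [h]
  have hs0 : 0 ≤ Real.sin (Real.arccos ⟪u, v⟫ / 2) := by
    apply Real.sin_nonneg_of_nonneg_of_le_pi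
    · linarith [Real.arccos_nonneg ⟪u,v⟫]
    · linarith [Real.arccos_le_pi ⟪u,v⟫, Real.pi_pos]
  nlinarith [norm_nonneg (u - v), hsq]

/-- comparison: for any ε>0 there is δ>0 s.t. angle ≤ (1+ε)·chord when chord ≤ δ. -/
lemma my_comparison {ε : ℝ} (hε : 0 < ε) :
    ∃ δ > 0, ∀ u v : H, ‖u‖ = 1 → ‖v‖ = 1 → ‖u - v‖ ≤ δ →
      Real.arccos ⟪u, v⟫ ≤ (1 + ε) * ‖u - v‖ := by
  -- choose η ≤ 1 with η² ≤ 16 ε/(1+ε), then δ = 2 sin (η/2)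
  set η : ℝ := min 1 (Real.sqrt (16 * ε / (1 + ε))) with hη
  have hη0 : 0 < η := by
    apply lt_min one_pos
    apply Real.sqrt_pos.2
    positivity
  have hη1 : η ≤ 1 := min_le_left _ _
  have hηsq : η ^ 2 * (1 + ε) ≤ 16 * ε := by
    have h1 : η ≤ Real.sqrt (16 * ε / (1 + ε)) := min_le_right _ _
    have h2 : η ^ 2 ≤ 16 * ε / (1 + ε) := by
      calc η ^ 2 ≤ Real.sqrt (16 * ε / (1 + ε)) ^ 2 := by
            apply pow_le_pow_left₀ hη0.le h1
        _ = 16 * ε / (1 + ε) := Real.sq_sqrt (by positivity)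
    rw [← le_div_iff₀ (by positivity : (0:ℝ) < 1 + ε)]
    exact h2
  have hsinη : 0 < Real.sin (η / 2) := by
    apply Real.sin_pos_of_pos_of_lt_pi (by linarith)
    calc η / 2 ≤ 1 / 2 := by linarith
      _ < π := by linarith [Real.pi_gt_three]
  refine ⟨2 * Real.sin (η / 2), by positivity, ?_⟩
  intro u v hu hv hd
  set ρ := Real.arccos ⟪u, v⟫ with hρ
  have hρ0 : 0 ≤ ρ := Real.arccos_nonneg _
  have hρπ : ρ ≤ π := Real.arccos_le_pi _
  have hchord : ‖u - v‖ = 2 * Real.sin (ρ / 2) := my_chord_eq_sin hu hv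
  have hsle : Real.sin (ρ / 2) ≤ Real.sin (η / 2) := by
    rw [hchord] at hd; linarith
  have hρη : ρ ≤ η := by
    by_contra hc
    push_neg at hc
    have : Real.sin (η / 2) < Real.sin (ρ / 2) := by
      apply Real.strictMonoOn_sin ⟨by linarith [Real.pi_pos], by linarith [Real.pi_gt_three]⟩
        ⟨by linarith [Real.pi_pos], by linarith⟩ (by linarith)
    linarith
  rw [hchord]
  rcases eq_or_lt_of_le hρ0 with h0 | h0
  · simp [← h0]
  · have hcube : ρ / 2 - (ρ / 2) ^ 3 / 4 < Real.sin (ρ / 2) :=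
      by have h := Real.sin_gt_sub_cube (x := ρ / 2) (by linarith); linarith [pow_pos (show (0:ℝ) < ρ / 2 by linarith) 3]
    have h1 : ρ ^ 2 * (1 + ε) ≤ 16 * ε := by
      nlinarith [pow_le_pow_left₀ hρ0 hρη 2]
    have h2 : ρ ^ 3 * (1 + ε) ≤ 16 * ε * ρ := by
      calc ρ ^ 3 * (1 + ε) = (ρ ^ 2 * (1 + ε)) * ρ := by ring
        _ ≤ 16 * ε * ρ := mul_le_mul_of_nonneg_right h1 hρ0
    nlinarith [mul_lt_mul_of_pos_left hcube (by linarith : (0:ℝ) < 1 + ε)]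

lemma partition_mono {k : ℕ} {t : ℕ → ℝ} (h : IsPartition k t) :
    ∀ i j, i ≤ j → j ≤ k → t i ≤ t j := by
  intro i j hij hjk
  induction j with
  | zero => simp_all
  | succ j ih =>
    rcases Nat.lt_or_ge i (j+1) with hlt | hge
    · have : t i ≤ t j := ih (by omega) (by omega)
      have := h.2.2.2 j (by omega)
      linarith
    · have : i = j + 1 := by omega
      simp [this]

lemma partition_mem {k : ℕ} {t : ℕ → ℝ} (h : IsPartition k t) {i : ℕ} (hi : i ≤ k) :
    t i ∈ Icc (0:ℝ) 1 := by
  constructor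
  · have := partition_mono h 0 i (by omega) hi; rw [h.2.1] at this; linarith
  · have := partition_mono h i k hi le_rfl; rw [h.2.2.1] at this; linarith

lemma partition_sum_sub {k : ℕ} {t : ℕ → ℝ} (h : IsPartition k t) :
    ∑ i ∈ Finset.range k, (t (i+1) - t i) = 1 := by
  rw [Finset.sum_range_sub, h.2.1, h.2.2.1, sub_zero]

lemma energy_partition_le {D : ℝ → ℝ → ℝ} {c : ℝ} (hc : 0 ≤ c)
    (h : energyOf D = ENNReal.ofReal c) {k : ℕ} {t : ℕ → ℝ} (hp : IsPartition k t) :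
    ∑ i ∈ Finset.range k, D (t i) (t (i + 1)) / (t (i + 1) - t i) ≤ c := by
  have hle : ENNReal.ofReal (∑ i ∈ Finset.range k, D (t i) (t (i + 1)) / (t (i + 1) - t i))
      ≤ energyOf D := le_iSup_of_le k (le_iSup_of_le t (le_iSup_of_le hp le_rfl))
  rw [h] at hle
  by_contra hcon
  push_neg at hcon
  rw [ENNReal.ofReal_le_ofReal_iff hc] at hle
  linarith

lemma my_arccos_chain' (v : ℕ → H) (n : ℕ) (hv : ∀ i ≤ n, ‖v i‖ = 1) :
    Real.arccos ⟪v 0, v n⟫ ≤ ∑ i ∈ Finset.range n, Real.arccos ⟪v i, v (i+1)⟫ := by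
  induction n with
  | zero => simp [real_inner_self_eq_norm_sq, hv 0 le_rfl, Real.arccos_one]
  | succ n ih =>
      rw [Finset.sum_range_succ]
      have h1 := my_arccos_triangle (hv 0 (by omega)) (hv n (by omega)) (hv (n+1) le_rfl)
      have h2 := ih (fun i hi => hv i (by omega))
      linarith

/-- the subdivision point of `[a,b]`. -/
lemma subPt_zero (a b : ℝ) (n : ℕ) : subPt a b n 0 = a := by simp [subPt]

lemma subPt_last (a b : ℝ) {n : ℕ} (hn : 0 < n) : subPt a b n n = b := by
  have : (n:ℝ) ≠ 0 := Nat.cast_ne_zero.mpr hn.ne'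
  simp only [subPt]; rw [mul_div_assoc, div_self this]; ring

lemma subPt_step (a b : ℝ) {n : ℕ} (hn : 0 < n) (i : ℕ) :
    subPt a b n (i+1) - subPt a b n i = (b - a) / n := by
  have : (n:ℝ) ≠ 0 := Nat.cast_ne_zero.mpr hn.ne'
  simp only [subPt]; push_cast; ring

lemma subPt_mem {a b : ℝ} {n : ℕ} (hn : 0 < n) (hab : a ≤ b) (ha : 0 ≤ a) (hb : b ≤ 1)
    {i : ℕ} (hi : i ≤ n) : subPt a b n i ∈ Icc (0:ℝ) 1 := by
  have hn0 : (0:ℝ) < n := by exact_mod_cast hn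
  have h1 : 0 ≤ (b - a) * i / n := by
    apply div_nonneg (mul_nonneg (by linarith) (Nat.cast_nonneg i)) hn0.le
  have h2 : (b - a) * i / n ≤ b - a := by
    rw [div_le_iff₀ hn0]
    have : (i:ℝ) ≤ n := by exact_mod_cast hi
    nlinarith
  unfold subPt
  constructor
  · linarith
  · linarith

lemma block_bound (γ : ℝ → H) (hsph : ∀ t ∈ Icc (0:ℝ) 1, ‖γ t‖ = 1)
    {a b ε δ : ℝ} {n : ℕ} (hn : 0 < n) (hab : a < b) (ha : 0 ≤ a) (hb : b ≤ 1)
    (hε : 0 < ε)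
    (hcomp : ∀ u v : H, ‖u‖ = 1 → ‖v‖ = 1 → ‖u - v‖ ≤ δ →
      Real.arccos ⟪u, v⟫ ≤ (1 + ε) * ‖u - v‖)
    (hsmall : ∀ i < n, dist (γ (subPt a b n i)) (γ (subPt a b n (i+1))) ≤ δ) :
    Real.arccos ⟪γ a, γ b⟫ ^ 2 / ((1+ε)^2 * (b - a)) ≤
      ∑ i ∈ Finset.range n, dist (γ (subPt a b n i)) (γ (subPt a b n (i+1))) ^ 2
        / (subPt a b n (i+1) - subPt a b n i) := by
  have hmem : ∀ i ≤ n, subPt a b n i ∈ Icc (0:ℝ) 1 :=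
    fun i hi => subPt_mem hn hab.le ha hb hi
  set d : ℕ → ℝ := fun i => dist (γ (subPt a b n i)) (γ (subPt a b n (i+1))) with hd
  set L := ∑ i ∈ Finset.range n, d i with hL
  have hL0 : 0 ≤ L := Finset.sum_nonneg (fun i _ => dist_nonneg)
  have hr : Real.arccos ⟪γ a, γ b⟫ ≤ (1+ε) * L := by
    have hchain := my_arccos_chain' (fun i => γ (subPt a b n i)) n
      (fun i hi => hsph _ (hmem i hi))
    beta_reduce at hchain
    rw [subPt_zero, subPt_last a b hn] at hchain
    have hterm : ∀ i ∈ Finset.range n,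
        Real.arccos ⟪γ (subPt a b n i), γ (subPt a b n (i+1))⟫ ≤ (1 + ε) * d i := by
      intro i hi
      have hik : i < n := Finset.mem_range.1 hi
      have := hcomp (γ (subPt a b n i)) (γ (subPt a b n (i+1)))
        (hsph _ (hmem i hik.le)) (hsph _ (hmem (i+1) hik))
        (by rw [← dist_eq_norm]; exact hsmall i hik)
      rw [← dist_eq_norm] at this
      exact this
    calc Real.arccos ⟪γ a, γ b⟫
        ≤ ∑ i ∈ Finset.range n, Real.arccos ⟪γ (subPt a b n i), γ (subPt a b n (i+1))⟫ := hchain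
      _ ≤ ∑ i ∈ Finset.range n, (1 + ε) * d i := Finset.sum_le_sum hterm
      _ = (1 + ε) * L := by rw [hL, Finset.mul_sum]
  -- Engel step
  have hε1 : (0:ℝ) < 1 + ε := by linarith
  have hba : (0:ℝ) < b - a := by linarith
  have hn0 : (0:ℝ) < n := by exact_mod_cast hn
  have hEngel : L ^ 2 / (b - a) ≤
      ∑ i ∈ Finset.range n, d i ^ 2 / (subPt a b n (i+1) - subPt a b n i) := by
    have hcs : L ^ 2 ≤ (n:ℝ) * ∑ i ∈ Finset.range n, d i ^ 2 := by
      have := sq_sum_le_card_mul_sum_sq (s := Finset.range n) (f := d)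
      simpa using this
    have hstep : ∀ i ∈ Finset.range n,
        d i ^ 2 / (subPt a b n (i+1) - subPt a b n i) = d i ^ 2 * n / (b - a) := by
      intro i _
      rw [subPt_step a b hn]
      field_simp
    rw [Finset.sum_congr rfl hstep, ← Finset.sum_div, ← Finset.sum_mul]
    rw [div_le_div_iff₀ hba hba]
    nlinarith [hcs, hba]
  -- combine
  have harc0 : 0 ≤ Real.arccos ⟪γ a, γ b⟫ := Real.arccos_nonneg _
  have hsq : Real.arccos ⟪γ a, γ b⟫ ^ 2 ≤ (1+ε)^2 * L^2 := by nlinarith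
  have hc : (0:ℝ) < (1+ε)^2 * (b - a) := mul_pos (pow_pos hε1 2) hba
  calc Real.arccos ⟪γ a, γ b⟫ ^ 2 / ((1+ε)^2 * (b - a))
      ≤ ((1+ε)^2 * L^2) / ((1+ε)^2 * (b - a)) := (div_le_div_iff_of_pos_right hc).2 hsq
    _ = L^2 / (b - a) := by
        rw [mul_div_mul_left _ _ (by positivity : ((1:ℝ)+ε)^2 ≠ 0)]
    _ ≤ _ := hEngel

lemma fullT_b1 (s t : ℝ) {n i : ℕ} (hi : i ≤ n) : fullT s t n i = subPt 0 s n i := if_pos hi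

lemma fullT_b2 (s t : ℝ) {n i : ℕ} (hn : 0 < n) (hi : i ≤ n) :
    fullT s t n (n + i) = subPt s t n i := by
  rcases Nat.eq_zero_or_pos i with h0 | hpos
  · subst h0
    rw [show n + 0 = n by omega, fullT_b1 s t le_rfl, subPt_last 0 s hn, subPt_zero]
  · rw [fullT, if_neg (by omega), if_pos (by omega)]
    congr 1
    omega

lemma fullT_b3 (s t : ℝ) {n i : ℕ} (hn : 0 < n) (hi : i ≤ n) :
    fullT s t n (n + (n + i)) = subPt t 1 n i := by
  rcases Nat.eq_zero_or_pos i with h0 | hpos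
  · subst h0
    rw [show n + (n + 0) = n + n by omega, fullT_b2 s t hn le_rfl, subPt_last s t hn,
      subPt_zero]
  · rw [fullT, if_neg (by omega), if_neg (by omega)]
    congr 1
    omega

lemma fullT_partition {s t : ℝ} {n : ℕ} (hn : 0 < n) (hs : 0 < s) (hst : s < t)
    (ht : t < 1) : IsPartition (n + (n + n)) (fullT s t n) := by
  have hn0 : (0:ℝ) < n := by exact_mod_cast hn
  refine ⟨by omega, ?_, ?_, ?_⟩
  · rw [fullT_b1 s t (by omega), subPt_zero]
  · rw [show n + (n + n) = n + (n + n) by rfl, fullT_b3 s t hn le_rfl, subPt_last t 1 hn]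
  · intro i hi
    rcases Nat.lt_or_ge i n with h1 | h1
    · rw [fullT_b1 s t h1.le, fullT_b1 s t (by omega)]
      have := subPt_step 0 s hn i
      have : subPt 0 s n (i+1) - subPt 0 s n i = (s - 0)/n := subPt_step 0 s hn i
      have hpos : (0:ℝ) < (s - 0)/n := by
        apply div_pos (by linarith) hn0
      linarith
    · rcases Nat.lt_or_ge i (2*n) with h2 | h2
      · obtain ⟨j, rfl⟩ : ∃ j, i = n + j := ⟨i - n, by omega⟩
        have hj : j < n := by omega
        rw [fullT_b2 s t hn hj.le, show n + j + 1 = n + (j+1) by omega,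
          fullT_b2 s t hn (by omega)]
        have := subPt_step s t hn j
        have hpos : (0:ℝ) < (t - s)/n := div_pos (by linarith) hn0
        linarith
      · obtain ⟨j, rfl⟩ : ∃ j, i = n + (n + j) := ⟨i - 2*n, by omega⟩
        have hj : j < n := by omega
        rw [fullT_b3 s t hn hj.le, show n + (n + j) + 1 = n + (n + (j+1)) by omega,
          fullT_b3 s t hn (by omega)]
        have := subPt_step t 1 hn j
        have hpos : (0:ℝ) < (1 - t)/n := div_pos (by linarith) hn0
        linarith


set_option maxHeartbeats 2000000 in
lemma forward_arccos (γ : ℝ → H) (hcont : ContinuousOn γ (Icc 0 1))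
    (hsph : ∀ t ∈ Icc (0:ℝ) 1, ‖γ t‖ = 1) (hant : γ 1 = -γ 0)
    (hE : ∀ (k : ℕ) (tt : ℕ → ℝ), IsPartition k tt →
      ∑ i ∈ Finset.range k, dist (γ (tt i)) (γ (tt (i+1))) ^ 2 / (tt (i+1) - tt i) ≤ π^2)
    {s t : ℝ} (hs : 0 < s) (hst : s < t) (ht : t < 1) :
    Real.arccos ⟪γ s, γ t⟫ = π * (t - s) := by
  have hγ0 : ‖γ 0‖ = 1 := hsph 0 ⟨le_rfl, zero_le_one⟩
  have hγ1 : ‖γ 1‖ = 1 := hsph 1 ⟨zero_le_one, le_rfl⟩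
  have hγs : ‖γ s‖ = 1 := hsph s ⟨hs.le, by linarith⟩
  have hγt : ‖γ t‖ = 1 := hsph t ⟨by linarith, ht.le⟩
  set r1 := Real.arccos ⟪γ 0, γ s⟫ with hr1
  set r2 := Real.arccos ⟪γ s, γ t⟫ with hr2
  set r3 := Real.arccos ⟪γ t, γ 1⟫ with hr3
  have hr10 : 0 ≤ r1 := Real.arccos_nonneg _
  have hr20 : 0 ≤ r2 := Real.arccos_nonneg _
  have hr30 : 0 ≤ r3 := Real.arccos_nonneg _
  -- triangle inequality: π ≤ r1 + r2 + r3
  have htri : π ≤ r1 + r2 + r3 := by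
    have h01 : ⟪γ 0, γ 1⟫ = -1 := by
      rw [hant, inner_neg_right, real_inner_self_eq_norm_sq, hγ0]
      norm_num
    have ht1 := my_arccos_triangle (u := γ 0) (v := γ s) (w := γ 1) hγ0 hγs hγ1
    have ht2 := my_arccos_triangle (u := γ s) (v := γ t) (w := γ 1) hγs hγt hγ1
    rw [h01, Real.arccos_neg_one] at ht1
    linarith
  -- key inequality
  have hY : r1^2/s + r2^2/(t-s) + r3^2/(1-t) ≤ π^2 := by
    have htend : Tendsto (fun ε : ℝ => (1+ε)^2 * π^2) (𝓝[>] (0:ℝ)) (𝓝 (π^2)) := by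
      have hc : Continuous (fun ε : ℝ => (1+ε)^2 * π^2) := by continuity
      have := (hc.tendsto 0).mono_left (nhdsWithin_le_nhds (s := Ioi (0:ℝ)))
      simpa using this
    apply ge_of_tendsto htend
    filter_upwards [self_mem_nhdsWithin] with ε (hε : ε ∈ Ioi (0:ℝ))
    rw [mem_Ioi] at hε
    obtain ⟨δ, hδ, hcomp⟩ := my_comparison (H := H) hε
    obtain ⟨δ', hδ', hUC⟩ := (Metric.uniformContinuousOn_iff.1
      ((isCompact_Icc).uniformContinuousOn_of_continuous hcont)) δ hδ
    obtain ⟨n, hnδ⟩ := exists_nat_gt (1/δ')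
    have hn : 0 < n := by
      by_contra h
      push_neg at h
      interval_cases n
      simp at hnδ
      have := div_pos one_pos hδ'
      linarith
    have hn0 : (0:ℝ) < n := by exact_mod_cast hn
    -- mesh estimate
    have hmesh : ∀ a b : ℝ, 0 ≤ a → a < b → b ≤ 1 → ∀ i < n,
        dist (γ (subPt a b n i)) (γ (subPt a b n (i+1))) ≤ δ := by
      intro a b ha hab hb i hi
      have hm1 : subPt a b n i ∈ Icc (0:ℝ) 1 := by
        unfold subPt
        constructor
        · have : 0 ≤ (b - a) * i / n := by
            apply div_nonneg (mul_nonneg (by linarith) (Nat.cast_nonneg i)) hn0.le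
          linarith
        · have : (b - a) * i / n ≤ b - a := by
            rw [div_le_iff₀ hn0]
            have hin : (i:ℝ) ≤ n := by exact_mod_cast hi.le
            nlinarith
          linarith
      have hm2 : subPt a b n (i+1) ∈ Icc (0:ℝ) 1 := by
        unfold subPt
        constructor
        · have : 0 ≤ (b - a) * (i+1:ℕ) / n := by
            apply div_nonneg (mul_nonneg (by linarith) (Nat.cast_nonneg _)) hn0.le
          linarith
        · have : (b - a) * (i+1:ℕ) / n ≤ b - a := by
            rw [div_le_iff₀ hn0]
            have hin : ((i+1:ℕ):ℝ) ≤ n := by exact_mod_cast hi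
            nlinarith
          linarith
      have hdist : dist (subPt a b n i) (subPt a b n (i+1)) < δ' := by
        rw [Real.dist_eq, abs_sub_comm, subPt_step a b hn i,
          abs_of_nonneg (div_nonneg (by linarith) hn0.le)]
        calc (b - a)/n ≤ 1/n := by gcongr; linarith
          _ < δ' := by
              rw [div_lt_iff₀ hδ'] at hnδ
              rw [div_lt_iff₀ hn0]
              linarith
      exact (hUC _ hm1 _ hm2 hdist).le
    -- three block bounds
    have hB1 := block_bound γ hsph hn hs le_rfl (by linarith) hε hcomp
      (hmesh 0 s le_rfl hs (by linarith))
    have hB2 := block_bound γ hsph hn hst (by linarith) (by linarith) hε hcomp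
      (hmesh s t hs.le hst (by linarith))
    have hB3 := block_bound γ hsph hn ht (by linarith) le_rfl hε hcomp
      (hmesh t 1 (by linarith) ht le_rfl)
    -- the full partition sum
    have hP := fullT_partition hn hs hst ht
    have hsum := hE _ _ hP
    rw [Finset.sum_range_add, Finset.sum_range_add] at hsum
    have e1 : ∑ i ∈ Finset.range n,
        dist (γ (fullT s t n i)) (γ (fullT s t n (i+1))) ^ 2
          / (fullT s t n (i+1) - fullT s t n i)
        = ∑ i ∈ Finset.range n,
        dist (γ (subPt 0 s n i)) (γ (subPt 0 s n (i+1))) ^ 2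
          / (subPt 0 s n (i+1) - subPt 0 s n i) := by
      apply Finset.sum_congr rfl
      intro i hi
      have hik : i < n := Finset.mem_range.1 hi
      rw [fullT_b1 s t hik.le, fullT_b1 s t hik]
    have e2 : ∑ i ∈ Finset.range n,
        dist (γ (fullT s t n (n + i))) (γ (fullT s t n (n + i + 1))) ^ 2
          / (fullT s t n (n + i + 1) - fullT s t n (n + i))
        = ∑ i ∈ Finset.range n,
        dist (γ (subPt s t n i)) (γ (subPt s t n (i+1))) ^ 2
          / (subPt s t n (i+1) - subPt s t n i) := by
      apply Finset.sum_congr rfl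
      intro i hi
      have hik : i < n := Finset.mem_range.1 hi
      rw [Nat.add_assoc, fullT_b2 s t hn hik.le, fullT_b2 s t hn hik]
    have e3 : ∑ i ∈ Finset.range n,
        dist (γ (fullT s t n (n + (n + i)))) (γ (fullT s t n (n + (n + i) + 1))) ^ 2
          / (fullT s t n (n + (n + i) + 1) - fullT s t n (n + (n + i)))
        = ∑ i ∈ Finset.range n,
        dist (γ (subPt t 1 n i)) (γ (subPt t 1 n (i+1))) ^ 2
          / (subPt t 1 n (i+1) - subPt t 1 n i) := by
      apply Finset.sum_congr rfl
      intro i hi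
      have hik : i < n := Finset.mem_range.1 hi
      have hidx : n + (n + i) + 1 = n + (n + (i + 1)) := by omega
      rw [hidx, fullT_b3 s t hn hik.le, fullT_b3 s t hn hik]
    rw [e1, e2, e3] at hsum
    have hε2 : (0:ℝ) < (1+ε)^2 := by positivity
    have h1 : r1^2/((1+ε)^2*(s - 0)) = (r1^2/s)/(1+ε)^2 := by
      rw [sub_zero, div_div, mul_comm]
    have h2 : r2^2/((1+ε)^2*(t - s)) = (r2^2/(t-s))/(1+ε)^2 := by
      rw [div_div, mul_comm]
    have h3 : r3^2/((1+ε)^2*(1 - t)) = (r3^2/(1-t))/(1+ε)^2 := by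
      rw [div_div, mul_comm]
    rw [hr1] at h1
    rw [hr2] at h2
    rw [hr3] at h3
    rw [h1] at hB1
    rw [h2] at hB2
    rw [h3] at hB3
    have hYK : (r1^2/s + r2^2/(t-s) + r3^2/(1-t))/(1+ε)^2 ≤ π^2 := by
      rw [add_div, add_div]
      rw [hr1, hr2, hr3]
      linarith
    rw [div_le_iff₀ hε2] at hYK
    linarith [hYK, mul_comm (π^2) ((1+ε)^2)]
  -- tangent line trick
  have hts : (0:ℝ) < t - s := by linarith
  have h1t : (0:ℝ) < 1 - t := by linarith
  have e1 : 2*π*r1 - π^2*s ≤ r1^2/s := by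
    have h := div_nonneg (sq_nonneg (r1 - π*s)) hs.le
    have hid : (r1 - π*s)^2/s = r1^2/s - 2*π*r1 + π^2*s := by
      field_simp
      ring
    linarith
  have e3 : 2*π*r3 - π^2*(1-t) ≤ r3^2/(1-t) := by
    have h := div_nonneg (sq_nonneg (r3 - π*(1-t))) h1t.le
    have hid : (r3 - π*(1-t))^2/(1-t) = r3^2/(1-t) - 2*π*r3 + π^2*(1-t) := by
      field_simp
      ring
    linarith
  have e2 : (r2 - π*(t-s))^2/(t-s) = r2^2/(t-s) - 2*π*r2 + π^2*(t-s) := by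
    field_simp
    ring
  have htri2 : 2*π*π ≤ 2*π*(r1+r2+r3) :=
    mul_le_mul_of_nonneg_left htri (by positivity)
  have hle0 : (r2 - π*(t-s))^2/(t-s) ≤ 0 := by nlinarith [hY, e1, e2, e3, htri2]
  have hsq : (r2 - π*(t-s))^2 ≤ 0 := by
    have h := mul_le_mul_of_nonneg_right hle0 hts.le
    rw [div_mul_cancel₀ _ hts.ne'] at h
    simpa using h
  have h0 : (r2 - π*(t-s))^2 = 0 := le_antisymm hsq (sq_nonneg _)
  have hfin : r2 - π*(t-s) = 0 := by
    exact pow_eq_zero_iff (by norm_num) |>.1 h0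
  rw [hr2] at hfin
  linarith [hfin]



lemma inner_of_formula (γ : ℝ → H) (hsph : ∀ t ∈ Icc (0:ℝ) 1, ‖γ t‖ = 1)
    (hform : ∀ t ∈ Icc (0:ℝ) 1, γ t = Real.cos (π * t) • γ 0 + Real.sin (π * t) • γ (1 / 2)) :
    ∀ a ∈ Icc (0:ℝ) 1, ∀ b ∈ Icc (0:ℝ) 1, ⟪γ a, γ b⟫ = Real.cos (π * (b - a)) := by
  have he0 : ‖γ 0‖ = 1 := hsph 0 (by norm_num)
  have he1 : ‖γ (1/2)‖ = 1 := hsph (1/2) (by norm_num)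
  have horth : ⟪γ 0, γ (1/2)⟫ = 0 := by
    have h4 := hform (1/4) (by norm_num)
    have hn := hsph (1/4) (by norm_num)
    have hsq : ‖γ (1/4)‖ ^ 2 = 1 := by rw [hn]; norm_num
    rw [h4, norm_add_sq_real, norm_smul, norm_smul, inner_smul_left, inner_smul_right,
      he0, he1] at hsq
    have hc : Real.cos (π * (1/4)) = Real.sqrt 2 / 2 := by
      rw [show π * (1/4) = π/4 by ring, Real.cos_pi_div_four]
    have hs : Real.sin (π * (1/4)) = Real.sqrt 2 / 2 := by
      rw [show π * (1/4) = π/4 by ring, Real.sin_pi_div_four]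
    rw [hc, hs] at hsq
    simp only [Real.norm_eq_abs, starRingEnd_apply, star_trivial] at hsq
    rw [abs_of_nonneg (by positivity : (0:ℝ) ≤ Real.sqrt 2 / 2)] at hsq
    have h2 : Real.sqrt 2 ^ 2 = 2 := Real.sq_sqrt (by norm_num)
    nlinarith [hsq, h2]
  intro a ha b hb
  rw [hform a ha, hform b hb]
  have horth' : ⟪γ (1/2), γ 0⟫ = 0 := by rw [real_inner_comm]; exact horth
  simp only [inner_add_left, inner_add_right, inner_smul_left, inner_smul_right,
    real_inner_self_eq_norm_sq, he0, he1, horth, horth', starRingEnd_apply, star_trivial]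
  rw [show π * (b - a) = π * b - π * a by ring, Real.cos_sub]
  ring

lemma energy_of_formula (γ : ℝ → H) (hsph : ∀ t ∈ Icc (0:ℝ) 1, ‖γ t‖ = 1)
    (hform : ∀ t ∈ Icc (0:ℝ) 1, γ t = Real.cos (π * t) • γ 0 + Real.sin (π * t) • γ (1 / 2)) :
    energyOf (fun s t => dist (γ s) (γ t) ^ 2) = ENNReal.ofReal (π ^ 2) := by
  have hinner := inner_of_formula γ hsph hform
  have hdist : ∀ a ∈ Icc (0:ℝ) 1, ∀ b ∈ Icc (0:ℝ) 1,
      dist (γ a) (γ b) ^ 2 = 2 - 2 * Real.cos (π * (b - a)) := by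
    intro a ha b hb
    rw [dist_eq_norm, norm_sub_sq_real, hsph a ha, hsph b hb, hinner a ha b hb]
    ring
  apply le_antisymm
  · -- upper bound
    rw [energyOf]
    apply iSup_le; intro k; apply iSup_le; intro t; apply iSup_le; intro hp
    rw [ENNReal.ofReal_le_ofReal_iff (by positivity)]
    calc ∑ i ∈ Finset.range k, dist (γ (t i)) (γ (t (i+1))) ^ 2 / (t (i+1) - t i)
        ≤ ∑ i ∈ Finset.range k, π ^ 2 * (t (i+1) - t i) := by
          apply Finset.sum_le_sum
          intro i hi
          have hik : i < k := Finset.mem_range.1 hi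
          have hΔ : 0 < t (i+1) - t i := by linarith [hp.2.2.2 i hik]
          have hti := partition_mem hp (le_of_lt hik)
          have hti1 := partition_mem hp (Nat.succ_le_of_lt hik)
          rw [hdist _ hti _ hti1, div_le_iff₀ hΔ]
          have hcos := Real.one_sub_sq_div_two_le_cos (x := π * (t (i+1) - t i))
          nlinarith [hcos, sq_nonneg (π * (t (i+1) - t i))]
      _ = π ^ 2 := by rw [← Finset.mul_sum, partition_sum_sub hp, mul_one]
  · -- lower bound via uniform partitions
    have hpart : ∀ n : ℕ, 1 ≤ n → IsPartition n (fun i => (i:ℝ)/n) := by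
      intro n hn
      have hn0 : (0:ℝ) < n := by exact_mod_cast hn
      refine ⟨hn, by simp, by field_simp, ?_⟩
      intro i hi
      show (i:ℝ)/n < ((i+1:ℕ):ℝ)/n
      apply div_lt_div_of_pos_right ?_ hn0
      push_cast; linarith
    -- value of the uniform partition sum
    have hsum : ∀ n : ℕ, 1 ≤ n →
        ∑ i ∈ Finset.range n, dist (γ ((i:ℝ)/n)) (γ (((i+1:ℕ):ℝ)/n)) ^ 2
          / (((i+1:ℕ):ℝ)/n - (i:ℝ)/n) = (n:ℝ)^2 * (2 - 2 * Real.cos (π / n)) := by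
      intro n hn
      have hn0 : (0:ℝ) < n := by exact_mod_cast hn
      have hterm : ∀ i ∈ Finset.range n,
          dist (γ ((i:ℝ)/n)) (γ (((i+1:ℕ):ℝ)/n)) ^ 2 / (((i+1:ℕ):ℝ)/n - (i:ℝ)/n)
            = (n:ℝ) * (2 - 2 * Real.cos (π / n)) := by
        intro i hi
        have hik : i < n := Finset.mem_range.1 hi
        have h1 : ((i:ℝ))/n ∈ Icc (0:ℝ) 1 := by
          constructor
          · positivity
          · rw [div_le_one hn0]; exact_mod_cast hik.le
        have h2 : (((i+1:ℕ):ℝ))/n ∈ Icc (0:ℝ) 1 := by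
          constructor
          · positivity
          · rw [div_le_one hn0]; exact_mod_cast hik
        rw [hdist _ h1 _ h2]
        have hΔ : ((i+1:ℕ):ℝ)/n - (i:ℝ)/n = 1/n := by push_cast; field_simp; ring
        rw [hΔ, show π * (1/(n:ℝ)) = π / n by ring]
        field_simp
      rw [Finset.sum_congr rfl hterm, Finset.sum_const, Finset.card_range, nsmul_eq_mul]
      ring
    have key : ∀ n : ℕ, 1 ≤ n →
        ENNReal.ofReal ((n:ℝ)^2 * (2 - 2 * Real.cos (π / n)))
          ≤ energyOf (fun s t => dist (γ s) (γ t) ^ 2) := by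
      intro n hn
      rw [energyOf]
      refine le_iSup_of_le n (le_iSup_of_le (fun i => (i:ℝ)/n)
        (le_iSup_of_le (hpart n hn) (le_of_eq ?_)))
      rw [hsum n hn]
    -- limit
    have hslope : Tendsto (fun x : ℝ => Real.sin x / x) (𝓝[≠] 0) (𝓝 1) := by
      have h := (Real.hasDerivAt_sin 0)
      rw [hasDerivAt_iff_tendsto_slope] at h
      rw [Real.cos_zero] at h
      refine h.congr ?_
      intro x
      simp [slope_def_field, div_eq_mul_inv]
    have hx : Tendsto (fun n : ℕ => π / (2 * (n:ℝ))) atTop (𝓝[≠] 0) := by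
      apply tendsto_nhdsWithin_of_tendsto_nhds_of_eventually_within
      · apply Tendsto.const_div_atTop
        exact (tendsto_natCast_atTop_atTop).const_mul_atTop two_pos
      · filter_upwards [eventually_ge_atTop 1] with n hn
        have hn0 : (0:ℝ) < n := by exact_mod_cast hn
        have : 0 < π / (2 * (n:ℝ)) := by positivity
        exact this.ne'
    have hreal : Tendsto (fun n : ℕ => (n:ℝ)^2 * (2 - 2 * Real.cos (π / n)))
        atTop (𝓝 (π^2)) := by
      have h1 : Tendsto (fun n : ℕ => π^2 * (Real.sin (π/(2*(n:ℝ))) / (π/(2*(n:ℝ))))^2)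
          atTop (𝓝 (π^2 * 1^2)) :=
        (((hslope.comp hx).pow 2).const_mul _)
      rw [one_pow, mul_one] at h1
      apply h1.congr'
      filter_upwards [eventually_ge_atTop 1] with n hn
      have hn0 : (0:ℝ) < n := by exact_mod_cast hn
      have hcos : 2 - 2 * Real.cos (π / n) = 4 * Real.sin (π/(2*(n:ℝ)))^2 := by
        have h := Real.sin_sq_eq_half_sub (π/(2*(n:ℝ)))
        rw [show 2 * (π/(2*(n:ℝ))) = π / n by field_simp] at h
        linarith
      rw [hcos]
      have hs : π/(2*(n:ℝ)) ≠ 0 := by positivity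
      field_simp
      ring
    have htend : Tendsto (fun n : ℕ => ENNReal.ofReal ((n:ℝ)^2 * (2 - 2 * Real.cos (π / n))))
        atTop (𝓝 (ENNReal.ofReal (π^2))) :=
      (ENNReal.continuous_ofReal.tendsto _).comp hreal
    apply le_of_tendsto htend
    filter_upwards [eventually_ge_atTop 1] with n hn
    exact key n hn

lemma forward_formula (γ : ℝ → H) (hcont : ContinuousOn γ (Icc 0 1))
    (hsph : ∀ t ∈ Icc (0:ℝ) 1, ‖γ t‖ = 1) (hant : γ 1 = -γ 0)
    (hinner : ∀ s t : ℝ, 0 < s → s < t → t < 1 → ⟪γ s, γ t⟫ = Real.cos (π * (t - s))) :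
    ∀ t ∈ Icc (0:ℝ) 1, γ t = Real.cos (π * t) • γ 0 + Real.sin (π * t) • γ (1 / 2) := by
  have inner0 : ∀ t ∈ Ioo (0:ℝ) 1, ⟪γ 0, γ t⟫ = Real.cos (π * t) := by
    rintro t ⟨ht0, ht1⟩
    haveI : (𝓝[Ioo (0:ℝ) t] 0).NeBot := by
      rw [nhdsWithin_Ioo_eq_nhdsGT ht0]
      infer_instance
    have hγcw : ContinuousWithinAt γ (Icc 0 1) 0 := hcont 0 ⟨le_rfl, zero_le_one⟩
    have hic : Continuous (fun x : H => ⟪x, γ t⟫) := continuous_id.inner continuous_const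
    have T1 : Tendsto (fun s => ⟪γ s, γ t⟫) (𝓝[Ioo 0 t] 0) (𝓝 ⟪γ 0, γ t⟫) := by
      have := (hic.continuousAt.comp_continuousWithinAt hγcw)
      exact this.mono_left (nhdsWithin_mono _ (fun x hx => ⟨hx.1.le, by
        rcases hx with ⟨h1, h2⟩; linarith⟩))
    have hg : Tendsto (fun s : ℝ => Real.cos (π * (t - s))) (𝓝[Ioo 0 t] 0)
        (𝓝 (Real.cos (π * t))) := by
      have hc : Continuous (fun s : ℝ => Real.cos (π * (t - s))) := by continuity
      have := (hc.tendsto 0).mono_left (nhdsWithin_le_nhds (s := Ioo (0:ℝ) t))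
      simpa using this
    have heq : (fun s : ℝ => Real.cos (π * (t - s))) =ᶠ[𝓝[Ioo 0 t] 0]
        (fun s => ⟪γ s, γ t⟫) := by
      filter_upwards [self_mem_nhdsWithin] with s hs
      exact (hinner s t hs.1 hs.2 ht1).symm
    exact (tendsto_nhds_unique (hg.congr' heq) T1).symm
  have innerHalf : ∀ t ∈ Ioo (0:ℝ) 1, ⟪γ t, γ (1/2)⟫ = Real.sin (π * t) := by
    rintro t ⟨ht0, ht1⟩
    rcases lt_trichotomy t (1/2) with h | h | h
    · rw [hinner t (1/2) ht0 h (by norm_num),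
        show π * (1/2 - t) = π/2 - π * t by ring, Real.cos_pi_div_two_sub]
    · subst h
      rw [real_inner_self_eq_norm_sq, hsph (1/2) (by norm_num)]
      rw [show π * (1/2) = π/2 by ring, Real.sin_pi_div_two]
      norm_num
    · rw [real_inner_comm, hinner (1/2) t (by norm_num) h ht1,
        show π * (t - 1/2) = -(π/2 - π * t) by ring, Real.cos_neg, Real.cos_pi_div_two_sub]
  have horth : ⟪γ 0, γ (1/2)⟫ = 0 := by
    rw [inner0 (1/2) ⟨by norm_num, by norm_num⟩, show π * (1/2:ℝ) = π/2 by ring,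
      Real.cos_pi_div_two]
  rintro t ⟨ht0, ht1⟩
  rcases eq_or_lt_of_le ht0 with h0 | h0
  · rw [← h0]
    simp
  rcases eq_or_lt_of_le ht1 with h1 | h1
  · rw [h1, hant]
    rw [mul_one, Real.cos_pi, Real.sin_pi]
    simp
  have hn : ‖γ t - (Real.cos (π * t) • γ 0 + Real.sin (π * t) • γ (1/2))‖^2 = 0 := by
    have hx : ‖γ t‖ = 1 := hsph t ⟨ht0, ht1⟩
    have h0' : ‖γ 0‖ = 1 := hsph 0 ⟨le_rfl, zero_le_one⟩
    have hh : ‖γ (1/2)‖ = 1 := hsph (1/2) (by norm_num)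
    have hiy : ⟪γ t, Real.cos (π * t) • γ 0 + Real.sin (π * t) • γ (1/2)⟫
        = Real.cos (π * t)^2 + Real.sin (π * t)^2 := by
      have hA := inner0 t ⟨h0, h1⟩
      rw [real_inner_comm] at hA
      have hB := innerHalf t ⟨h0, h1⟩
      rw [inner_add_right, real_inner_smul_right, real_inner_smul_right, hA, hB]
      ring
    have hny : ‖Real.cos (π * t) • γ 0 + Real.sin (π * t) • γ (1/2)‖^2
        = Real.cos (π * t)^2 + Real.sin (π * t)^2 := by
      rw [norm_add_sq_real, real_inner_smul_left, real_inner_smul_right, horth,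
        norm_smul, norm_smul, h0', hh]
      simp [Real.norm_eq_abs, sq_abs]
    rw [norm_sub_sq_real, hx, hiy, hny, Real.cos_sq_add_sin_sq]
    norm_num
  have := pow_eq_zero_iff (n := 2) (by norm_num) |>.1 hn
  rw [norm_eq_zero, sub_eq_zero] at this
  exact this

end Aux


/-- a continuous path on the unit sphere of a real Hilbert space between two
antipodal points has energy exactly π² if and only if it is the great-circle path
γ(t) = cos(πt)·γ(0) + sin(πt)·γ(1/2). -/
theorem hilbert_sphere_path_energy_eq_iff
    {H : Type*} [NormedAddCommGroup H] [InnerProductSpace ℝ H]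
    (γ : ℝ → H) (hcont : ContinuousOn γ (Icc 0 1))
    (hsph : ∀ t ∈ Icc (0:ℝ) 1, ‖γ t‖ = 1)
    (hant : γ 1 = -γ 0) :
    energyOf (fun s t => dist (γ s) (γ t) ^ 2) = ENNReal.ofReal (π ^ 2) ↔
      ∀ t ∈ Icc (0:ℝ) 1,
        γ t = Real.cos (π * t) • γ 0 + Real.sin (π * t) • γ (1 / 2) := by
  constructor
  · intro hE t ht
    have hE' : ∀ (k : ℕ) (tt : ℕ → ℝ), IsPartition k tt →
        ∑ i ∈ Finset.range k, dist (γ (tt i)) (γ (tt (i+1))) ^ 2 / (tt (i+1) - tt i) ≤ π^2 :=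
      fun k tt hp => by simpa using energy_partition_le (by positivity) hE hp
    refine forward_formula γ hcont hsph hant ?_ t ht
    intro s u hs hsu hu1
    have h := forward_arccos γ hcont hsph hant hE' hs hsu hu1
    have hb := my_inner_mem (hsph s ⟨hs.le, by linarith⟩) (hsph u ⟨by linarith, hu1.le⟩)
    rw [← Real.cos_arccos hb.1 hb.2, h]
  · intro hform
    exact energy_of_formula γ hsph hform
end
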